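/- Let g₁, …, gₙ : ℝ → ℝ ∪ {+∞} be convex, proper, lower semicontinuous functions, let x₁, …, xₙ ∈ ℝ^d be nonzero, and for w ∈ ℝ^d, s ∈ ℝ, let Tₜ(w, s) be the unique minimizer over u ∈ ℝ of (1/2)·‖w + (u − s)xₜ‖² + gₜ(u). Then for all w, ŵ ∈ ℝ^d and α ∈ ℝⁿ, ∑_{t=1}^n (Tₜ(w, αₜ) − Tₜ(ŵ, αₜ))² ≤ ∑_{t=1}^n ((w − ŵ)ᵀxₜ / ‖xₜ‖²)² = ‖X̄(w − ŵ)‖², where X̄ is the n×d matrix with rows xₜᵀ/‖xₜ‖². -/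

import Mathlib

open scoped RealInnerProductSpace

lemma scalar_limit' (L c K : ℝ)
    (h : ∀ θ : ℝ, 0 < θ → θ ≤ 1 → L*(1-θ)*c^2 ≤ c*K) : L*c^2 ≤ c*K := by
  by_contra h'
  push_neg at h'
  have hK0 : 0 ≤ c*K := by have := h 1 one_pos le_rfl; linarith
  set c2 := L*c^2 with hc2
  have hc2pos : 0 < c2 := lt_of_le_of_lt hK0 h'
  have hθpos : (0:ℝ) < (c2 - c*K)/(2*c2) := by
    apply div_pos (by linarith) (by linarith)
  have hθle : (c2 - c*K)/(2*c2) ≤ 1 := by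
    rw [div_le_one (by linarith)]; linarith
  have hmain := h _ hθpos hθle
  have hexp : L*(1-(c2 - c*K)/(2*c2))*c^2 = c2 - (c2-c*K)/2 := by
    have hcne : c ≠ 0 := by rintro rfl; rw [hc2] at hc2pos; simp at hc2pos
    have hLne : L ≠ 0 := by rintro rfl; rw [hc2] at hc2pos; simp at hc2pos
    rw [hc2]; field_simp
  rw [hexp] at hmain
  linarith

lemma scalar_final' (L c K : ℝ) (hL : 0 < L) (h : L*c^2 ≤ c*K) : c^2 ≤ (K/L)^2 := by
  rw [div_pow, le_div_iff₀ (by positivity)]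
  nlinarith [sq_nonneg (K - L*c), mul_le_mul_of_nonneg_left h hL.le, sq_nonneg c]

/-- With `Tₜ(w,s)` the unique minimizer of `u ↦ (1/2)‖w + (u−s)xₜ‖² + gₜ(u)` for convex,
proper, lsc `gₜ` and nonzero `xₜ`, for all `w, ŵ, α`:
`∑ₜ (Tₜ(w,αₜ) − Tₜ(ŵ,αₜ))² ≤ ∑ₜ ((w−ŵ)ᵀxₜ/‖xₜ‖²)² = ‖X̄(w−ŵ)‖²`. -/
theorem coordinate_update_map_contraction
    (n d : ℕ) (hn : 1 ≤ n) (hd : 1 ≤ d)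
    (g : Fin n → ℝ → EReal)
    (hconv : ∀ t, ∀ a b θ : ℝ, 0 ≤ θ → θ ≤ 1 →
      g t (θ * a + (1 - θ) * b) ≤ (θ : EReal) * g t a + ((1 - θ : ℝ) : EReal) * g t b)
    (hproper_bot : ∀ t z, g t z ≠ ⊥) (hproper_top : ∀ t, ∃ z, g t z ≠ ⊤)
    (hlsc : ∀ t, LowerSemicontinuous (g t))
    (x : Fin n → EuclideanSpace ℝ (Fin d)) (hx : ∀ t, x t ≠ 0)
    (T : Fin n → EuclideanSpace ℝ (Fin d) → ℝ → ℝ)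
    (hTmin : ∀ (t : Fin n) (w : EuclideanSpace ℝ (Fin d)) (s u : ℝ),
      (((1 / 2) * ‖w + (T t w s - s) • x t‖ ^ 2 : ℝ) : EReal) + g t (T t w s)
        ≤ (((1 / 2) * ‖w + (u - s) • x t‖ ^ 2 : ℝ) : EReal) + g t u)
    (hTuniq : ∀ (t : Fin n) (w : EuclideanSpace ℝ (Fin d)) (s u : ℝ),
      (((1 / 2) * ‖w + (u - s) • x t‖ ^ 2 : ℝ) : EReal) + g t u
        ≤ (((1 / 2) * ‖w + (T t w s - s) • x t‖ ^ 2 : ℝ) : EReal) + g t (T t w s)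
          → u = T t w s)
    (Xbar : EuclideanSpace ℝ (Fin d) → EuclideanSpace ℝ (Fin n))
    (hXbar : ∀ (z : EuclideanSpace ℝ (Fin d)) (t : Fin n), Xbar z t = ⟪z, x t⟫ / ‖x t‖ ^ 2) :
    ∀ (w what : EuclideanSpace ℝ (Fin d)) (α : Fin n → ℝ),
      (∑ t, (T t w (α t) - T t what (α t)) ^ 2
          ≤ ∑ t, (⟪w - what, x t⟫ / ‖x t‖ ^ 2) ^ 2) ∧
      (∑ t, (⟪w - what, x t⟫ / ‖x t‖ ^ 2) ^ 2 = ‖Xbar (w - what)‖ ^ 2) := by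
  intro w what α
  constructor
  · apply Finset.sum_le_sum
    intro t _
    set X := x t with hX
    set L : ℝ := ‖X‖^2 with hLdef
    have hL : 0 < L := by
      have : 0 < ‖X‖ := norm_pos_iff.mpr (hx t)
      positivity
    set s := α t with hs
    set u := T t w s with hu
    set v := T t what s with hv
    set A : ℝ := ⟪w, X⟫ with hA
    set B : ℝ := ⟪what, X⟫ with hB
    -- quadratic expansion
    have hQ : ∀ (w' : EuclideanSpace ℝ (Fin d)) (r : ℝ),
        ((1/2) * ‖w' + (r - s) • X‖ ^ 2 : ℝ)
          = (1/2)*(‖w'‖^2 + 2*(r-s)*⟪w', X⟫ + (r-s)^2*L) := by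
      intro w' r
      rw [norm_add_sq_real, real_inner_smul_right, norm_smul]
      simp only [Real.norm_eq_abs, mul_pow, sq_abs, hLdef]
      ring
    -- finiteness of g at minimizers
    have hfin : ∀ w' : EuclideanSpace ℝ (Fin d), ∃ G : ℝ, g t (T t w' s) = (G : EReal) := by
      intro w'
      obtain ⟨z, hz⟩ := hproper_top t
      have hz' : g t z = (((g t z).toReal : ℝ) : EReal) :=
        (EReal.coe_toReal hz (hproper_bot t z)).symm
      have h1 := hTmin t w' s z
      rw [hz', ← EReal.coe_add] at h1
      have hne : g t (T t w' s) ≠ ⊤ := by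
        intro htop
        rw [htop, EReal.add_top_of_ne_bot (EReal.coe_ne_bot _)] at h1
        exact (EReal.coe_lt_top _).not_ge h1
      exact ⟨(g t (T t w' s)).toReal, (EReal.coe_toReal hne (hproper_bot _ _)).symm⟩
    obtain ⟨Gu, hGu⟩ := hfin w
    obtain ⟨Gv, hGv⟩ := hfin what
    rw [← hu] at hGu
    rw [← hv] at hGv
    -- one-sided strong minimality in real form
    have step : ∀ (w' : EuclideanSpace ℝ (Fin d)) (Ga Gb : ℝ) (θ : ℝ),
        g t (T t w' s) = (Ga : EReal) → ∀ b : ℝ, g t b = (Gb : EReal) →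
        0 < θ → θ ≤ 1 →
        (1/2)*(‖w'‖^2 + 2*(T t w' s - s)*⟪w', X⟫ + (T t w' s - s)^2*L) + Ga
          ≤ (1/2)*(‖w'‖^2 + 2*(θ*b + (1-θ)*(T t w' s) - s)*⟪w', X⟫
              + (θ*b + (1-θ)*(T t w' s) - s)^2*L) + (θ*Gb + (1-θ)*Ga) := by
      intro w' Ga Gb θ hGa b hGb hθ hθ1
      have h1 := hTmin t w' s (θ*b + (1-θ)*(T t w' s))
      have hc := hconv t b (T t w' s) θ hθ.le hθ1
      rw [hGa, hGb] at *
      have h2 : (((1 / 2) * ‖w' + (T t w' s - s) • X‖ ^ 2 : ℝ) : EReal) + (Ga : EReal)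
          ≤ (((1 / 2) * ‖w' + ((θ*b + (1-θ)*(T t w' s)) - s) • X‖ ^ 2 : ℝ) : EReal)
            + ((θ*Gb + (1-θ)*Ga : ℝ) : EReal) := by
        refine h1.trans (add_le_add_right ?_ _)
        refine hc.trans ?_
        rw [← EReal.coe_mul, ← EReal.coe_mul, ← EReal.coe_add]
      rw [← EReal.coe_add, ← EReal.coe_add, EReal.coe_le_coe_iff, hQ, hQ] at h2
      exact h2
    -- the key inequality for each θ
    have key : ∀ θ : ℝ, 0 < θ → θ ≤ 1 → L*(1-θ)*(u-v)^2 ≤ (u-v)*(B-A) := by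
      intro θ hθ hθ1
      have h1 := step w Gu Gv θ hGu v hGv hθ hθ1
      have h2 := step what Gv Gu θ hGv u hGu hθ hθ1
      rw [← hu, ← hA] at h1
      rw [← hv, ← hB] at h2
      have hsum : θ*(L*(1-θ)*(u-v)^2) ≤ θ*((u-v)*(B-A)) := by nlinarith [h1, h2]
      exact le_of_mul_le_mul_left hsum hθ
    have hkey := scalar_limit' L (u-v) (B-A) key
    have hfinal := scalar_final' L (u-v) (B-A) hL hkey
    have hinner : ⟪w - what, X⟫ = A - B := by
      rw [hA, hB, inner_sub_left]
    rw [hinner]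
    have : ((B-A)/L)^2 = ((A-B)/L)^2 := by ring
    rw [this] at hfinal
    exact hfinal
  · have hnorm : ‖Xbar (w - what)‖ ^ 2 = ∑ t, (Xbar (w - what) t)^2 := by
      rw [EuclideanSpace.norm_eq, Real.sq_sqrt (by positivity)]
      simp [sq_abs]
    rw [hnorm]
    exact Finset.sum_congr rfl fun t _ => by rw [hXbar]
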